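/- Let $k > 0$, $e_0 > 0$, $\alpha > 0$, $u_0 > 0$, and let $r : [0,\infty) \to (0,\infty)$ solve $r''(t) = k e_0 / r(t)$ with $r(0) = \alpha$, $r'(0) = u_0$. Then for all $t \geq 0$: $r(t) \geq \sqrt{\alpha^2 + 2\alpha u_0 t + k e_0 t^2}$. -/

import Mathlib

theorem cylindrical_flow_lower_bound
    (k e0 α u0 : ℝ) (hk : 0 < k) (he0 : 0 < e0) (hα : 0 < α) (hu0 : 0 < u0)
    (r r' : ℝ → ℝ)
    (hrpos : ∀ t ≥ (0:ℝ), 0 < r t)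
    (hr : ∀ t ≥ (0:ℝ), HasDerivAt r (r' t) t)
    (hr' : ∀ t ≥ (0:ℝ), HasDerivAt r' (k * e0 / r t) t)
    (hr0 : r 0 = α) (hr'0 : r' 0 = u0) :
    ∀ t ≥ (0:ℝ), r t ≥ Real.sqrt (α ^ 2 + 2 * α * u0 * t + k * e0 * t ^ 2) := by
  -- h t := r t * r' t - α*u0 - k*e0*t has nonneg derivative r'^2 on Ici 0
  set h : ℝ → ℝ := fun t => r t * r' t - α * u0 - k * e0 * t with hh
  have hhderiv : ∀ t ≥ (0:ℝ), HasDerivAt h (r' t ^ 2) t := by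
    intro t ht
    have h1 := ((hr t ht).mul (hr' t ht)).sub_const (α * u0)
    have h2 := h1.sub ((hasDerivAt_id t).const_mul (k * e0))
    refine (h2 : HasDerivAt h _ t).congr_deriv ?_
    have : r t ≠ 0 := (hrpos t ht).ne'
    field_simp
    ring
  have hcontr : ContinuousOn h (Set.Ici 0) := fun t ht =>
    ((hhderiv t ht).continuousAt).continuousWithinAt
  have hmono : MonotoneOn h (Set.Ici (0:ℝ)) := by
    apply monotoneOn_of_hasDerivWithinAt_nonneg (convex_Ici 0) hcontr
    · intro x hx
      rw [interior_Ici] at hx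
      exact ((hhderiv x (le_of_lt hx)).hasDerivWithinAt)
    · intro x _; positivity
  have hnonneg : ∀ t ≥ (0:ℝ), 0 ≤ h t := by
    intro t ht
    have h0 : h 0 = 0 := by simp [hh, hr0, hr'0]
    have := hmono (Set.self_mem_Ici) ht ht
    rw [h0] at this; exact this
  -- g t := r t ^ 2 - (α^2 + 2αu₀t + ke₀t²) has derivative 2 h t ≥ 0
  set g : ℝ → ℝ := fun t => r t ^ 2 - (α ^ 2 + 2 * α * u0 * t + k * e0 * t ^ 2) with hg
  have hgderiv : ∀ t ≥ (0:ℝ), HasDerivAt g (2 * h t) t := by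
    intro t ht
    have h1 := (hr t ht).pow 2
    have h2 : HasDerivAt (fun t => α ^ 2 + 2 * α * u0 * t + k * e0 * t ^ 2)
        (2 * α * u0 + k * e0 * (2 * t)) t := by
      have := ((hasDerivAt_id t).const_mul (2 * α * u0)).add
        (((hasDerivAt_pow 2 t)).const_mul (k * e0))
      have h3 := this.const_add (α ^ 2); norm_num [id_eq] at h3; exact (h3.const_add (α ^ 2)).congr_of_eventuallyEq (Filter.Eventually.of_forall fun x => by ring)
    refine (h1.sub h2 : HasDerivAt g _ t).congr_deriv ?_
    simp [hh]; ring
  have hgmono : MonotoneOn g (Set.Ici (0:ℝ)) := by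
    apply monotoneOn_of_hasDerivWithinAt_nonneg (convex_Ici 0)
      (fun t ht => ((hgderiv t ht).continuousAt).continuousWithinAt)
    · intro x hx
      rw [interior_Ici] at hx
      exact ((hgderiv x (le_of_lt hx)).hasDerivWithinAt)
    · intro x hx
      rw [interior_Ici] at hx
      have := hnonneg x (le_of_lt hx)
      linarith
  intro t ht
  have h0 : g 0 = 0 := by simp [hg, hr0]
  have hge : 0 ≤ g t := by
    have := hgmono (Set.self_mem_Ici) ht ht
    rw [h0] at this; exact this
  have hle : α ^ 2 + 2 * α * u0 * t + k * e0 * t ^ 2 ≤ r t ^ 2 := by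
    simp only [hg] at hge; linarith
  calc Real.sqrt (α ^ 2 + 2 * α * u0 * t + k * e0 * t ^ 2)
      ≤ Real.sqrt (r t ^ 2) := Real.sqrt_le_sqrt hle
    _ = r t := by rw [Real.sqrt_sq (hrpos t ht).le]
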